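/- For multi-indices α = (α_1,...,α_p) ∈ ℤ_+^p with ∑_r α_r ≤ m−1, one has ∑_{j ∈ {1,...,m}^p} γ_{m,j} · j^{2α+1} = [α = 0], where γ_{m,j} := ∏_r γ_{m,j_r}, γ_{m,j} := (-1)^{j-1}(2/j)C(2m,m+j)/C(2m,m), and j^{2α+1} := ∏_r j_r^{2α_r+1}. -/

import Mathlib

noncomputable def gam (m j : ℕ) : ℝ :=
  (-1) ^ (j - 1) * (2 / j) * (Nat.choose (2 * m) (m + j)) / (Nat.choose (2 * m) m)

/-- Alternating sum of binomial coefficients against a power: vanishes for exponent < n. -/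
lemma alt_sum : ∀ n : ℕ, ∀ a : ℕ, a < n →
    ∑ k ∈ Finset.range (n + 1), (-1 : ℝ) ^ k * (n.choose k : ℝ) * (k : ℝ) ^ a = 0 := by
  intro n
  induction n with
  | zero => intro a ha; omega
  | succ n ih =>
    intro a ha
    match a with
    | 0 =>
      have h := Int.alternating_sum_range_choose_of_ne (n := n + 1) (Nat.succ_ne_zero n)
      have h2 : ((∑ m ∈ Finset.range (n + 2), ((-1) ^ m * ((n+1).choose m) : ℤ) : ℤ) : ℝ) = 0 := by
        rw [h]; norm_num
      push_cast at h2
      simpa using h2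
    | b + 1 =>
      have key : ∀ i : ℕ, (-1:ℝ)^(i+1) * ((n+1).choose (i+1) : ℝ) * ((i:ℝ)+1)^(b+1)
          = -((n:ℝ)+1) * ∑ t ∈ Finset.range (b+1),
              (b.choose t : ℝ) * ((-1:ℝ)^i * (n.choose i : ℝ) * (i:ℝ)^t) := by
        intro i
        have hc : ((n:ℝ)+1) * (n.choose i : ℝ) = ((n+1).choose (i+1) : ℝ) * ((i:ℝ)+1) := by
          exact_mod_cast Nat.add_one_mul_choose_eq n i
        have hb : ((i:ℝ) + 1)^b = ∑ t ∈ Finset.range (b+1), (i:ℝ)^t * (b.choose t : ℝ) := by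
          simpa using add_pow (i:ℝ) 1 b
        calc (-1:ℝ)^(i+1) * ((n+1).choose (i+1) : ℝ) * ((i:ℝ)+1)^(b+1)
            = (-1:ℝ)^(i+1) * (((n+1).choose (i+1) : ℝ) * ((i:ℝ)+1)) * ((i:ℝ)+1)^b := by
              rw [pow_succ ((i:ℝ)+1)]; ring
          _ = (-1:ℝ)^(i+1) * (((n:ℝ)+1) * (n.choose i : ℝ)) * ((i:ℝ)+1)^b := by rw [hc]
          _ = -((n:ℝ)+1) * ((-1:ℝ)^i * (n.choose i : ℝ) *
                ∑ t ∈ Finset.range (b+1), (i:ℝ)^t * (b.choose t : ℝ)) := by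
              rw [← hb, pow_succ]; ring
          _ = -((n:ℝ)+1) * ∑ t ∈ Finset.range (b+1),
                (b.choose t : ℝ) * ((-1:ℝ)^i * (n.choose i : ℝ) * (i:ℝ)^t) := by
              rw [Finset.mul_sum]; congr 1
              apply Finset.sum_congr rfl; intro t _; ring
      rw [Finset.sum_range_succ']
      have hmain : ∑ i ∈ Finset.range (n+1),
          (-1:ℝ)^(i+1) * ((n+1).choose (i+1) : ℝ) * (((i+1 : ℕ)):ℝ)^(b+1) = 0 := by
        calc ∑ i ∈ Finset.range (n+1),
            (-1:ℝ)^(i+1) * ((n+1).choose (i+1) : ℝ) * (((i+1 : ℕ)):ℝ)^(b+1)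
            = ∑ i ∈ Finset.range (n+1), -((n:ℝ)+1) * ∑ t ∈ Finset.range (b+1),
                (b.choose t : ℝ) * ((-1:ℝ)^i * (n.choose i : ℝ) * (i:ℝ)^t) := by
              apply Finset.sum_congr rfl; intro i _
              rw [← key i]; push_cast; ring
          _ = -((n:ℝ)+1) * ∑ i ∈ Finset.range (n+1), ∑ t ∈ Finset.range (b+1),
                (b.choose t : ℝ) * ((-1:ℝ)^i * (n.choose i : ℝ) * (i:ℝ)^t) := by
              rw [Finset.mul_sum]
          _ = -((n:ℝ)+1) * ∑ t ∈ Finset.range (b+1), ∑ i ∈ Finset.range (n+1),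
                (b.choose t : ℝ) * ((-1:ℝ)^i * (n.choose i : ℝ) * (i:ℝ)^t) := by
              rw [Finset.sum_comm]
          _ = 0 := by
              have hz : ∀ t ∈ Finset.range (b+1), ∑ i ∈ Finset.range (n+1),
                  (b.choose t : ℝ) * ((-1:ℝ)^i * (n.choose i : ℝ) * (i:ℝ)^t) = 0 := by
                intro t ht
                rw [← Finset.mul_sum, ih t (by simp at ht; omega)]; ring
              rw [Finset.sum_congr rfl hz]; simp
      rw [hmain]
      simp

/-- One-dimensional identity. -/
lemma one_dim (m a : ℕ) (hm : 1 ≤ m) (ha : a ≤ m - 1) :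
    ∑ j ∈ Finset.Icc 1 m, gam m j * (j:ℝ)^(2*a+1) = if a = 0 then 1 else 0 := by
  set f : ℕ → ℝ := fun k => (-1:ℝ)^k * ((2*m).choose k : ℝ) * ((k:ℝ) - m)^(2*a) with hf
  -- Step 1: total alternating sum is zero
  have hS : ∑ k ∈ Finset.range (2*m + 1), f k = 0 := by
    have expand : ∀ k : ℕ, ((k:ℝ) - m)^(2*a)
        = ∑ t ∈ Finset.range (2*a+1), ((-(m:ℝ))^(2*a - t) * ((2*a).choose t : ℝ)) * (k:ℝ)^t := by
      intro k
      have := add_pow (k:ℝ) (-(m:ℝ)) (2*a)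
      rw [show (k:ℝ) + -(m:ℝ) = (k:ℝ) - m by ring] at this
      rw [this]
      apply Finset.sum_congr rfl; intro t _; ring
    calc ∑ k ∈ Finset.range (2*m + 1), f k
        = ∑ k ∈ Finset.range (2*m+1), ∑ t ∈ Finset.range (2*a+1),
            ((-(m:ℝ))^(2*a - t) * ((2*a).choose t : ℝ)) *
              ((-1:ℝ)^k * ((2*m).choose k : ℝ) * (k:ℝ)^t) := by
          apply Finset.sum_congr rfl; intro k _
          rw [hf]; simp only []
          rw [expand k, Finset.mul_sum]
          apply Finset.sum_congr rfl; intro t _; ring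
      _ = ∑ t ∈ Finset.range (2*a+1), ((-(m:ℝ))^(2*a - t) * ((2*a).choose t : ℝ)) *
            ∑ k ∈ Finset.range (2*m+1), ((-1:ℝ)^k * ((2*m).choose k : ℝ) * (k:ℝ)^t) := by
          rw [Finset.sum_comm]
          apply Finset.sum_congr rfl; intro t _; rw [Finset.mul_sum]
      _ = 0 := by
          have hz : ∀ t ∈ Finset.range (2*a+1),
              ((-(m:ℝ))^(2*a - t) * ((2*a).choose t : ℝ)) *
              ∑ k ∈ Finset.range (2*m+1), ((-1:ℝ)^k * ((2*m).choose k : ℝ) * (k:ℝ)^t) = 0 := by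
            intro t ht
            rw [alt_sum (2*m) t (by simp at ht; omega)]; ring
          rw [Finset.sum_congr rfl hz]; simp
  -- Step 2: symmetrize
  have hT : ∀ j, 1 ≤ j → j ≤ m →
      f (m + j) = (-1:ℝ)^(m+j) * ((2*m).choose (m+j) : ℝ) * (j:ℝ)^(2*a) := by
    intro j h1 h2
    simp only [hf]
    push_cast
    ring_nf
  set T : ℝ := ∑ j ∈ Finset.Icc 1 m,
      (-1:ℝ)^(m+j) * ((2*m).choose (m+j) : ℝ) * (j:ℝ)^(2*a) with hTdef
  have hneg : ∀ k : ℕ, k ≤ 2*m → (-1:ℝ)^(2*m - k) = (-1:ℝ)^k := by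
    intro k hk
    have h1 : (-1:ℝ)^(2*m-k) * ((-1:ℝ)^k * (-1:ℝ)^k) = (-1:ℝ)^(2*m-k) := by
      rw [← pow_add]
      have : k + k = 2*k := by ring
      rw [this, pow_mul]; norm_num
    have h2 : (-1:ℝ)^(2*m-k) * (-1:ℝ)^k = 1 := by
      rw [← pow_add]
      have : 2*m - k + k = 2*m := by omega
      rw [this, pow_mul]; norm_num
    calc (-1:ℝ)^(2*m-k) = (-1:ℝ)^(2*m-k) * ((-1:ℝ)^k * (-1:ℝ)^k) := h1.symm
      _ = ((-1:ℝ)^(2*m-k) * (-1:ℝ)^k) * (-1:ℝ)^k := by ring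
      _ = (-1:ℝ)^k := by rw [h2, one_mul]
  have hA : ∑ k ∈ Finset.range m, f k = T := by
    apply Finset.sum_nbij' (i := fun k => m - k) (j := fun j => m - j)
    · intro k hk; simp only [Finset.mem_range] at hk; simp only [Finset.mem_Icc]; omega
    · intro j hj; simp only [Finset.mem_Icc] at hj; simp only [Finset.mem_range]; omega
    · intro k hk; simp only [Finset.mem_range] at hk; omega
    · intro j hj; simp only [Finset.mem_Icc] at hj; omega
    · intro k hk
      simp only [Finset.mem_range] at hk
      simp only [hf]
      have e1 : m + (m - k) = 2*m - k := by omega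
      have e2 : ((2*m).choose (2*m - k) : ℝ) = ((2*m).choose k : ℝ) := by
        exact_mod_cast congrArg Nat.cast (Nat.choose_symm (by omega : k ≤ 2*m))
      have e3 : ((m - k : ℕ) : ℝ) = (m:ℝ) - k := by
        push_cast [Nat.cast_sub (by omega : k ≤ m)]; ring
      rw [e1, hneg k (by omega), e2, e3]
      have e4 : ((k:ℝ) - m)^(2*a) = ((m:ℝ) - k)^(2*a) := by
        have : (k:ℝ) - m = -((m:ℝ) - k) := by ring
        rw [this, Even.neg_pow (even_two_mul a)]
      rw [e4]
  have hB : ∑ k ∈ Finset.Icc (m+1) (2*m), f k = T := by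
    apply Finset.sum_nbij' (i := fun k => k - m) (j := fun j => m + j)
    · intro k hk; simp only [Finset.mem_Icc] at hk ⊢; omega
    · intro j hj; simp only [Finset.mem_Icc] at hj ⊢; omega
    · intro k hk; simp only [Finset.mem_Icc] at hk; omega
    · intro j hj; simp only [Finset.mem_Icc] at hj; omega
    · intro k hk
      simp only [Finset.mem_Icc] at hk
      obtain ⟨j, rfl⟩ : ∃ j, k = m + j := ⟨k - m, by omega⟩
      rw [hT j (by omega) (by omega)]
      simp
  have hfm : f m = (-1:ℝ)^m * ((2*m).choose m : ℝ) * (if a = 0 then 1 else 0) := by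
    simp only [hf, sub_self]
    by_cases ha0 : a = 0
    · simp [ha0]
    · rw [zero_pow (by omega : 2*a ≠ 0), if_neg ha0]
  have hsplit : ∑ k ∈ Finset.range (2*m + 1), f k
      = (∑ k ∈ Finset.range m, f k) + (f m + ∑ k ∈ Finset.Icc (m+1) (2*m), f k) := by
    rw [Finset.range_eq_Ico,
      ← Finset.sum_Ico_consecutive f (by omega : 0 ≤ m) (by omega : m ≤ 2*m+1)]
    congr 1
    · rw [Finset.range_eq_Ico]
    rw [Finset.sum_eq_sum_Ico_succ_bot (by omega : m < 2*m+1), Finset.Ico_add_one_right_eq_Icc]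
  rw [hsplit, hA, hB, hfm] at hS
  set I : ℝ := (if a = 0 then (1:ℝ) else 0) with hI
  set C : ℝ := ((2*m).choose m : ℝ) with hCdef
  have hCpos : 0 < C := by
    rw [hCdef]
    exact_mod_cast Nat.choose_pos (by omega : m ≤ 2*m)
  set U : ℝ := ∑ j ∈ Finset.Icc 1 m,
      (-1:ℝ)^j * ((2*m).choose (m+j) : ℝ) * (j:ℝ)^(2*a) with hUdef
  have hTU : T = (-1:ℝ)^m * U := by
    rw [hTdef, hUdef, Finset.mul_sum]
    apply Finset.sum_congr rfl; intro j _; rw [pow_add]; ring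
  have hU : 2*U + C * I = 0 := by
    have h9 : (-1:ℝ)^m * (2*U + C * I) = (-1:ℝ)^m * 0 := by
      rw [mul_zero, ← hS, hTU]; ring
    exact mul_left_cancel₀ (pow_ne_zero _ (by norm_num)) h9
  have hterm : ∀ j ∈ Finset.Icc 1 m, gam m j * (j:ℝ)^(2*a+1)
      = (-2 / C) * ((-1:ℝ)^j * ((2*m).choose (m+j) : ℝ) * (j:ℝ)^(2*a)) := by
    intro j hj
    simp only [Finset.mem_Icc] at hj
    have hj0 : (j:ℝ) ≠ 0 := Nat.cast_ne_zero.mpr (by omega)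
    have hsgn : (-1:ℝ)^(j-1) = -(-1:ℝ)^j := by
      obtain ⟨t, rfl⟩ : ∃ t, j = t + 1 := ⟨j-1, by omega⟩
      simp [pow_succ]
    unfold gam
    rw [hsgn, pow_succ]
    rw [← hCdef]
    field_simp
  rw [Finset.sum_congr rfl hterm, ← Finset.mul_sum, ← hUdef]
  have hU' : U = -(C * I) / 2 := by linarith
  rw [hU']
  field_simp

set_option maxHeartbeats 1000000 in
theorem stmt9 (p m : ℕ) (hp : 1 ≤ p) (hm : 1 ≤ m) (α : Fin p → ℕ)
    (hα : ∑ r, α r ≤ m - 1) :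
    ∑ j ∈ Finset.Icc (1 : Fin p → ℕ) (fun _ => m),
      (∏ r, gam m (j r)) * ∏ r, (j r : ℝ) ^ (2 * α r + 1) =
      if α = 0 then 1 else 0 := by
  classical
  have hr : ∀ r : Fin p, α r ≤ m - 1 := fun r =>
    le_trans (Finset.single_le_sum (fun _ _ => Nat.zero_le _) (Finset.mem_univ r)) hα
  have hIcc : Finset.Icc (1 : Fin p → ℕ) (fun _ => m)
      = Fintype.piFinset (fun _ : Fin p => Finset.Icc 1 m) := by
    rw [Pi.Icc_eq]
    rfl
  rw [hIcc]
  calc ∑ j ∈ Fintype.piFinset (fun _ : Fin p => Finset.Icc 1 m),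
        (∏ r, gam m (j r)) * ∏ r, (j r : ℝ) ^ (2 * α r + 1)
      = ∑ j ∈ Fintype.piFinset (fun _ : Fin p => Finset.Icc 1 m),
        ∏ r, (gam m (j r) * (j r : ℝ) ^ (2 * α r + 1)) := by
        apply Finset.sum_congr rfl; intro j _; rw [← Finset.prod_mul_distrib]
    _ = ∏ r, ∑ j ∈ Finset.Icc 1 m, gam m j * (j:ℝ)^(2 * α r + 1) :=
        (Finset.prod_univ_sum (fun _ : Fin p => Finset.Icc 1 m) (fun r j => gam m j * (j:ℝ)^(2 * α r + 1))).symm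
    _ = ∏ r, (if α r = 0 then (1:ℝ) else 0) := by
        apply Finset.prod_congr rfl; intro r _; exact one_dim m (α r) hm (hr r)
    _ = if α = 0 then 1 else 0 := by
        by_cases h : α = 0
        · simp [h]
        · rw [if_neg h]
          obtain ⟨r, hr0⟩ : ∃ r, α r ≠ 0 := by
            by_contra hc; push_neg at hc; exact h (funext fun r => hc r)
          exact Finset.prod_eq_zero (Finset.mem_univ r) (by simp [hr0])
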